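/- Suppose b, d : ℕ → ℝ are polynomial functions with d of degree at most 2, b - d of degree at most 1, d(0) = 0, b(x) > 0 and d(x+1) > 0 for all x ∈ ℕ, and ∑_{x≥1} ∏_{k=0}^{x} b(k)/d(k+1) < ∞. If moreover the eigenvalues λ_n = n·(b-d)'(slope) + (1/2) n(n-1)·(second difference of d) are strictly negative for all n ≥ 1, then d has degree exactly 1, i.e., d(x) = c·x for some c > 0. -/

import Mathlib

/-- Classification step: for a solvable birth-death process with state space ℕ,
the death rate polynomial has degree exactly one, i.e. `d x = c * x` with `c > 0`. -/
theorem death_rate_linear (b d : ℕ → ℝ) (pb pd : Polynomial ℝ)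
    (hbe : ∀ x : ℕ, b x = pb.eval (x : ℝ)) (hde : ∀ x : ℕ, d x = pd.eval (x : ℝ))
    (hdeg_d : pd.natDegree ≤ 2) (hdeg_bd : (pb - pd).natDegree ≤ 1)
    (hd0 : d 0 = 0) (hb_pos : ∀ x : ℕ, 0 < b x) (hd_pos : ∀ x : ℕ, 0 < d (x + 1))
    (hsum : Summable (fun x : ℕ => ∏ k ∈ Finset.range (x + 1), b k / d (k + 1)))
    (heig : ∀ n : ℕ, 1 ≤ n →
      (n : ℝ) * ((b 1 - d 1) - (b 0 - d 0))
        + (1 / 2) * (n : ℝ) * ((n : ℝ) - 1) * (d 2 - 2 * d 1 + d 0) < 0) :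
    ∃ c : ℝ, 0 < c ∧ ∀ x : ℕ, d x = c * (x : ℝ) := by
  set c0 := pd.coeff 0 with hc0def
  set c1 := pd.coeff 1 with hc1def
  set c2 := pd.coeff 2 with hc2def
  have hexp : ∀ x : ℝ, pd.eval x = c0 + c1 * x + c2 * x ^ 2 := by
    intro x
    rw [Polynomial.eval_eq_sum_range' (lt_of_le_of_lt hdeg_d (by norm_num : (2:ℕ) < 3))]
    simp [Finset.sum_range_succ]
    rfl
  have hdx : ∀ x : ℕ, d x = c0 + c1 * x + c2 * (x:ℝ) ^ 2 := fun x => by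
    rw [hde x, hexp]
  have hc0 : c0 = 0 := by
    have := hdx 0
    rw [hd0] at this
    push_cast at this
    linarith
  have hA : d 2 - 2 * d 1 + d 0 = 2 * c2 := by
    rw [hdx 0, hdx 1, hdx 2]; push_cast; ring
  -- rule out c2 < 0
  have hc2nn : 0 ≤ c2 := by
    by_contra h
    push_neg at h
    obtain ⟨n, hn⟩ := exists_nat_gt (max 1 (c1 / (-c2)))
    have hn1 : (1:ℝ) < n := lt_of_le_of_lt (le_max_left _ _) hn
    have hn2 : c1 / (-c2) < n := lt_of_le_of_lt (le_max_right _ _) hn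
    have hc1n : c1 < (n:ℝ) * (-c2) := (div_lt_iff₀ (by linarith)).mp hn2
    have hnn : 1 ≤ n := by exact_mod_cast hn1.le
    have hpos : 0 < d n := by
      have := hd_pos (n - 1)
      rwa [Nat.sub_add_cancel hnn] at this
    rw [hdx n, hc0] at hpos
    nlinarith
  -- rule out c2 > 0
  have hc2z : c2 = 0 := by
    rcases eq_or_lt_of_le hc2nn with h | h
    · exact h.symm
    exfalso
    obtain ⟨n, hn⟩ := exists_nat_gt (max 1 ((c2 - ((b 1 - d 1) - (b 0 - d 0))) / c2))
    have hn1 : (1:ℝ) < n := lt_of_le_of_lt (le_max_left _ _) hn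
    have hn2 : (c2 - ((b 1 - d 1) - (b 0 - d 0))) / c2 < n :=
      lt_of_le_of_lt (le_max_right _ _) hn
    have hkey : c2 - ((b 1 - d 1) - (b 0 - d 0)) < (n:ℝ) * c2 := (div_lt_iff₀ h).mp hn2
    have hnn : 1 ≤ n := by exact_mod_cast hn1.le
    have := heig n hnn
    rw [hA] at this
    nlinarith [mul_pos (show (0:ℝ) < n by linarith)
      (show 0 < ((b 1 - d 1) - (b 0 - d 0)) - c2 + (n:ℝ) * c2 by linarith)]
  have hc1 : c1 = d 1 := by rw [hdx 1, hc0, hc2z]; push_cast; ring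
  refine ⟨c1, by rw [hc1]; exact hd_pos 0, fun x => ?_⟩
  rw [hdx x, hc0, hc2z]; ring
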